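/- The commute time is a metric on the nodes of a connected weighted graph: it is zero on the diagonal, symmetric, and satisfies the triangle inequality c(i,j) ≤ c(i,k) + c(k,j). -/

import Mathlib

open Matrix BigOperators

/-- Probability that the random walk with transition probabilities `p`,
started at `i`, reaches `j` for the first time in exactly `t` steps. -/
noncomputable def hitProb {n : ℕ} (p : Fin n → Fin n → ℝ) : ℕ → Fin n → Fin n → ℝ
  | 0, i, j => if i = j then 1 else 0
  | t + 1, i, j => if i = j then 0 else ∑ l, p i l * hitProb p t l j

/-- Expected first-hitting time of `j` from `i`. -/
noncomputable def hittingTime {n : ℕ} (p : Fin n → Fin n → ℝ) (i j : Fin n) : ℝ :=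
  ∑' t : ℕ, (t : ℝ) * hitProb p t i j

namespace CTProof

open Finset Filter Relation

theorem hittingTime_self {n : ℕ} (p : Fin n → Fin n → ℝ) (j : Fin n) :
    hittingTime p j j = 0 := by
  have h : ∀ t : ℕ, (t : ℝ) * hitProb p t j j = 0 := by
    intro t
    cases t with
    | zero => simp
    | succ t => simp [hitProb]
  unfold hittingTime
  rw [tsum_congr h, tsum_zero]

variable {n : ℕ} {p : Fin n → Fin n → ℝ}

/-- Survival probability: chance the walk from `i` has not hit `j` within `t` steps. -/
noncomputable def surv (p : Fin n → Fin n → ℝ) : ℕ → Fin n → Fin n → ℝ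
  | 0, i, j => if i = j then 0 else 1
  | t + 1, i, j => if i = j then 0 else ∑ l, p i l * surv p t l j

theorem surv_zero (i j : Fin n) : surv p 0 i j = if i = j then 0 else 1 := rfl

theorem surv_succ (t : ℕ) (i j : Fin n) :
    surv p (t + 1) i j = if i = j then 0 else ∑ l, p i l * surv p t l j := rfl

section basic
variable (hp0 : ∀ i l, 0 ≤ p i l) (hp1 : ∀ i, ∑ l, p i l = 1)
include hp0

theorem hitProb_nonneg (t : ℕ) (i j : Fin n) : 0 ≤ hitProb p t i j := by
  induction t generalizing i with
  | zero => unfold hitProb; positivity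
  | succ t ih =>
      unfold hitProb
      split
      · exact le_refl _
      · exact Finset.sum_nonneg fun l _ => mul_nonneg (hp0 i l) (ih l)

theorem surv_nonneg (t : ℕ) (i j : Fin n) : 0 ≤ surv p t i j := by
  induction t generalizing i with
  | zero => unfold surv; positivity
  | succ t ih =>
      unfold surv
      split
      · exact le_refl _
      · exact Finset.sum_nonneg fun l _ => mul_nonneg (hp0 i l) (ih l)

theorem hittingTime_nonneg (i j : Fin n) : 0 ≤ hittingTime p i j :=
  tsum_nonneg fun t => mul_nonneg (Nat.cast_nonneg t) (hitProb_nonneg hp0 t i j)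

omit hp0

theorem surv_self (t : ℕ) (j : Fin n) : surv p t j j = 0 := by
  cases t <;> simp [surv]

include hp0 hp1

theorem surv_le_one (t : ℕ) (i j : Fin n) : surv p t i j ≤ 1 := by
  induction t generalizing i with
  | zero => unfold surv; split <;> norm_num
  | succ t ih =>
      unfold surv
      split
      · norm_num
      · calc ∑ l, p i l * surv p t l j ≤ ∑ l, p i l * 1 :=
              Finset.sum_le_sum fun l _ =>
                mul_le_mul_of_nonneg_left (ih l) (hp0 i l)
          _ = 1 := by simp [hp1 i]

theorem hitProb_succ_eq (t : ℕ) (i j : Fin n) :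
    hitProb p (t + 1) i j = surv p t i j - surv p (t + 1) i j := by
  induction t generalizing i with
  | zero =>
      by_cases h : i = j
      · simp [h, hitProb, surv_self]
      · have h1 : ∀ l, p i l * (if l = j then (1:ℝ) else 0)
            = (if l = j then p i l else 0) := by
          intro l; split <;> simp
        have h2 : ∀ l, p i l * (if l = j then (0:ℝ) else 1)
            = p i l - (if l = j then p i l else 0) := by
          intro l; split <;> simp
        simp only [hitProb, surv_zero, surv_succ, h, if_false]
        rw [Finset.sum_congr rfl fun l _ => h1 l, Finset.sum_congr rfl fun l _ => h2 l,
          Finset.sum_sub_distrib, hp1 i, Finset.sum_ite_eq' Finset.univ j (p i)]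
        simp
  | succ t ih =>
      by_cases h : i = j
      · simp [h, hitProb, surv_self]
      · have key : ∀ l, p i l * hitProb p (t+1) l j
            = p i l * surv p t l j - p i l * surv p (t+1) l j := by
          intro l; rw [ih l]; ring
        have e1 : surv p (t+1) i j = ∑ l, p i l * surv p t l j := by
          rw [surv_succ, if_neg h]
        have e2 : surv p (t+1+1) i j = ∑ l, p i l * surv p (t+1) l j := by
          rw [surv_succ, if_neg h]
        show (if i = j then 0 else ∑ l, p i l * hitProb p (t+1) l j)
          = surv p (t+1) i j - surv p (t+1+1) i j
        rw [if_neg h, Finset.sum_congr rfl fun l _ => key l, Finset.sum_sub_distrib, e1, e2]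

theorem surv_succ_le (t : ℕ) (i j : Fin n) : surv p (t + 1) i j ≤ surv p t i j := by
  have := hitProb_succ_eq hp0 hp1 t i j
  have h2 := hitProb_nonneg hp0 (t+1) i j
  linarith

theorem surv_anti {s t : ℕ} (hst : s ≤ t) (i j : Fin n) :
    surv p t i j ≤ surv p s i j := by
  induction t with
  | zero => simp_all
  | succ t ih =>
      rcases Nat.lt_or_ge s (t+1) with h | h
      · exact (surv_succ_le hp0 hp1 t i j).trans (ih (Nat.lt_succ_iff.mp h))
      · have : s = t + 1 := le_antisymm hst h
        subst this; exact le_refl _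

theorem surv_submul (m : ℕ) (j : Fin n) (B : ℝ) (hB0 : 0 ≤ B)
    (hB : ∀ l, surv p m l j ≤ B) : ∀ s i, surv p (m + s) i j ≤ B * surv p s i j := by
  intro s
  induction s with
  | zero =>
      intro i
      by_cases h : i = j
      · subst h; simp [surv_self]
      · rw [Nat.add_zero, surv_zero, if_neg h, mul_one]; exact hB i
  | succ s ih =>
      intro i
      rw [Nat.add_succ, surv_succ, surv_succ]
      by_cases h : i = j
      · simp [h]
      · rw [if_neg h, if_neg h, Finset.mul_sum]
        refine Finset.sum_le_sum fun l _ => ?_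
        calc p i l * surv p (m + s) l j ≤ p i l * (B * surv p s l j) :=
              mul_le_mul_of_nonneg_left (ih l) (hp0 i l)
          _ = B * (p i l * surv p s l j) := by ring

theorem surv_pow (m : ℕ) (j : Fin n) (B : ℝ) (hB0 : 0 ≤ B) (hB1 : B ≤ 1)
    (hB : ∀ l, surv p m l j ≤ B) : ∀ q i, surv p (q * m) i j ≤ B ^ q := by
  intro q
  induction q with
  | zero => intro i; simpa using surv_le_one hp0 hp1 0 i j
  | succ q ih =>
      intro i
      have : (q + 1) * m = m + q * m := by ring
      rw [this]
      calc surv p (m + q * m) i j ≤ B * surv p (q * m) i j := surv_submul hp0 hp1 m j B hB0 hB (q * m) i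
        _ ≤ B * B ^ q := by
              exact mul_le_mul_of_nonneg_left (ih i) hB0
        _ = B ^ (q + 1) := by ring

theorem exists_surv_lt_one
    (hconn : ∀ a b : Fin n, Relation.ReflTransGen (fun a b => 0 < p a b) a b)
    (j l : Fin n) : ∃ t, surv p t l j < 1 := by
  have h := hconn l j
  induction h using Relation.ReflTransGen.head_induction_on with
  | refl => exact ⟨0, by simp [surv_self]⟩
  | @head a c hac hcb ih =>
      obtain ⟨t, ht⟩ := ih
      refine ⟨t + 1, ?_⟩
      by_cases h : a = j
      · subst h; rw [surv_self]; norm_num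
      · rw [surv_succ, if_neg h]
        calc ∑ l', p a l' * surv p t l' j < ∑ l', p a l' * 1 := by
              refine Finset.sum_lt_sum
                (fun l' _ => mul_le_mul_of_nonneg_left (surv_le_one hp0 hp1 t l' j) (hp0 a l'))
                ⟨c, Finset.mem_univ c, mul_lt_mul_of_pos_left ht hac⟩
          _ = 1 := by simp [hp1 a]

theorem exists_decay
    (hconn : ∀ a b : Fin n, Relation.ReflTransGen (fun a b => 0 < p a b) a b)
    (j : Fin n) : ∃ (m : ℕ) (B : ℝ), 1 ≤ m ∧ 0 ≤ B ∧ B < 1 ∧ ∀ l, surv p m l j ≤ B := by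
  choose t ht using exists_surv_lt_one hp0 hp1 hconn j
  set m := (Finset.univ : Finset (Fin n)).sup t + 1 with hm
  have hml : ∀ l, surv p m l j < 1 := fun l =>
    lt_of_le_of_lt
      (surv_anti hp0 hp1 (Nat.le_succ_of_le (Finset.le_sup (Finset.mem_univ l))) l j) (ht l)
  have hne : (Finset.univ : Finset (Fin n)).Nonempty := ⟨j, Finset.mem_univ j⟩
  refine ⟨m, Finset.univ.sup' hne (fun l => surv p m l j), Nat.le_add_left 1 _, ?_, ?_, ?_⟩
  · exact le_trans (surv_nonneg hp0 m j j) (Finset.le_sup' (fun l => surv p m l j) (Finset.mem_univ j))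
  · exact (Finset.sup'_lt_iff hne).mpr fun l _ => hml l
  · exact fun l => Finset.le_sup' (fun l => surv p m l j) (Finset.mem_univ l)

theorem sum_range_surv_le
    (hconn : ∀ a b : Fin n, Relation.ReflTransGen (fun a b => 0 < p a b) a b)
    (i j : Fin n) : ∃ C : ℝ, ∀ N, ∑ t ∈ Finset.range N, surv p t i j ≤ C := by
  obtain ⟨m, B, hm1, hB0, hB1, hB⟩ := exists_decay hp0 hp1 hconn j
  refine ⟨(m : ℝ) * (1 - B)⁻¹, fun N => ?_⟩
  have hgeo : ∀ q, surv p (q * m) i j ≤ B ^ q := fun q => surv_pow hp0 hp1 m j B hB0 hB1.le hB q i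
  have hblock : ∀ q, ∑ t ∈ Finset.range (q * m), surv p t i j ≤ (m : ℝ) * ∑ r ∈ Finset.range q, B ^ r := by
    intro q
    induction q with
    | zero => simp
    | succ q ih =>
        have h1 : (q + 1) * m = q * m + m := by ring
        rw [h1, Finset.sum_range_add, Finset.sum_range_succ, mul_add]
        refine add_le_add ih ?_
        calc ∑ t ∈ Finset.range m, surv p (q * m + t) i j
            ≤ ∑ _t ∈ Finset.range m, B ^ q :=
              Finset.sum_le_sum fun t _ =>
                le_trans (surv_anti hp0 hp1 (Nat.le_add_right _ _) i j) (hgeo q)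
          _ = (m : ℝ) * B ^ q := by simp [mul_comm]
  calc ∑ t ∈ Finset.range N, surv p t i j
      ≤ ∑ t ∈ Finset.range (N * m), surv p t i j := by
        refine Finset.sum_le_sum_of_subset_of_nonneg
          (Finset.range_subset_range.mpr (Nat.le_mul_of_pos_right N (Nat.lt_of_lt_of_le Nat.zero_lt_one hm1)))
          (fun t _ _ => surv_nonneg hp0 t i j)
    _ ≤ (m : ℝ) * ∑ r ∈ Finset.range N, B ^ r := hblock N
    _ ≤ (m : ℝ) * (1 - B)⁻¹ := by
        refine mul_le_mul_of_nonneg_left ?_ (Nat.cast_nonneg m)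
        calc ∑ r ∈ Finset.range N, B ^ r ≤ ∑' r : ℕ, B ^ r :=
              (summable_geometric_of_lt_one hB0 hB1).sum_le_tsum (Finset.range N) (fun r _ => pow_nonneg hB0 r)
          _ = (1 - B)⁻¹ := tsum_geometric_of_lt_one hB0 hB1

theorem summable_surv
    (hconn : ∀ a b : Fin n, Relation.ReflTransGen (fun a b => 0 < p a b) a b)
    (i j : Fin n) : Summable (fun t => surv p t i j) := by
  obtain ⟨C, hC⟩ := sum_range_surv_le hp0 hp1 hconn i j
  exact summable_of_sum_range_le (fun t => surv_nonneg hp0 t i j) hC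

theorem key_partial_sum (i j : Fin n) (N : ℕ) :
    ∑ t ∈ Finset.range (N + 1), (t : ℝ) * hitProb p t i j
      = ∑ t ∈ Finset.range N, surv p t i j - N * surv p N i j := by
  induction N with
  | zero => simp
  | succ N ih =>
      rw [Finset.sum_range_succ, ih, hitProb_succ_eq hp0 hp1 N i j, Finset.sum_range_succ]
      push_cast
      ring

theorem summable_hit (hconn : ∀ a b : Fin n, Relation.ReflTransGen (fun a b => 0 < p a b) a b)
    (i j : Fin n) : Summable (fun t : ℕ => (t : ℝ) * hitProb p t i j) := by
  obtain ⟨C, hC⟩ := sum_range_surv_le hp0 hp1 hconn i j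
  refine summable_of_sum_range_le (fun (t:ℕ) => mul_nonneg (Nat.cast_nonneg t) (hitProb_nonneg hp0 t i j)) (c := C) ?_
  intro N
  calc ∑ t ∈ Finset.range N, (t : ℝ) * hitProb p t i j
      ≤ ∑ t ∈ Finset.range (N + 1), (t : ℝ) * hitProb p t i j := by
        refine Finset.sum_le_sum_of_subset_of_nonneg (Finset.range_subset_range.mpr (Nat.le_succ N))
          (fun (t:ℕ) _ _ => mul_nonneg (Nat.cast_nonneg t) (hitProb_nonneg hp0 t i j))
    _ = ∑ t ∈ Finset.range N, surv p t i j - N * surv p N i j := key_partial_sum hp0 hp1 i j N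
    _ ≤ ∑ t ∈ Finset.range N, surv p t i j := by
        have := mul_nonneg (Nat.cast_nonneg (α := ℝ) N) (surv_nonneg hp0 N i j)
        linarith
    _ ≤ C := hC N

theorem tendsto_mul_surv
    (hconn : ∀ a b : Fin n, Relation.ReflTransGen (fun a b => 0 < p a b) a b)
    (i j : Fin n) :
    Filter.Tendsto (fun N : ℕ => (N : ℝ) * surv p N i j) Filter.atTop (nhds 0) := by
  obtain ⟨m, B, hm1, hB0, hB1, hB⟩ := exists_decay hp0 hp1 hconn j
  have hm0 : 0 < m := hm1
  have hgeo : ∀ q, surv p (q * m) i j ≤ B ^ q := fun q => surv_pow hp0 hp1 m j B hB0 hB1.le hB q i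
  -- the auxiliary geometric sequence tends to zero
  have haux : Filter.Tendsto (fun q : ℕ => ((q : ℝ) + 1) * (m : ℝ) * B ^ q)
      Filter.atTop (nhds 0) := by
    have hsum : Summable (fun q : ℕ => ((q : ℝ) + 1) * (m : ℝ) * B ^ q) := by
      have h1 : Summable (fun q : ℕ => (q : ℝ) ^ 1 * B ^ q) :=
        summable_pow_mul_geometric_of_norm_lt_one 1 (by rwa [Real.norm_eq_abs, abs_of_nonneg hB0])
      have h2 : Summable (fun q : ℕ => B ^ q) := summable_geometric_of_lt_one hB0 hB1
      have := ((h1.add h2).mul_right (m : ℝ))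
      refine this.congr fun q => ?_
      simp; ring
    simpa using hsum.tendsto_atTop_zero
  have hdiv : Filter.Tendsto (fun N : ℕ => N / m) Filter.atTop Filter.atTop := by
    refine Filter.tendsto_atTop_atTop.mpr fun b => ⟨b * m, fun N hN => ?_⟩
    exact (Nat.le_div_iff_mul_le hm0).mpr hN
  have hcomp := haux.comp hdiv
  refine squeeze_zero (fun (N:ℕ) => mul_nonneg (Nat.cast_nonneg N) (surv_nonneg hp0 N i j))
    (fun (N:ℕ) => ?_) hcomp
  show (N : ℝ) * surv p N i j ≤ ((N / m : ℕ) + 1 : ℝ) * (m : ℝ) * B ^ (N / m)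
  have hNle : (N : ℝ) ≤ ((N / m : ℕ) + 1 : ℝ) * (m : ℝ) := by
    have h1 := Nat.div_add_mod N m
    have h2 := Nat.mod_lt N hm0
    have : N ≤ (N / m + 1) * m := by nlinarith [h1, h2]
    calc (N : ℝ) ≤ (((N / m + 1) * m : ℕ) : ℝ) := by exact_mod_cast this
      _ = ((N / m : ℕ) + 1 : ℝ) * (m : ℝ) := by push_cast; ring
  have hsurvN : surv p N i j ≤ B ^ (N / m) :=
    le_trans (surv_anti hp0 hp1 (Nat.div_mul_le_self N m) i j) (hgeo (N / m))
  calc (N : ℝ) * surv p N i j ≤ ((N / m : ℕ) + 1 : ℝ) * (m : ℝ) * surv p N i j :=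
        mul_le_mul_of_nonneg_right hNle (surv_nonneg hp0 N i j)
    _ ≤ ((N / m : ℕ) + 1 : ℝ) * (m : ℝ) * B ^ (N / m) := by
        refine mul_le_mul_of_nonneg_left hsurvN (by positivity)

theorem hittingTime_eq
    (hconn : ∀ a b : Fin n, Relation.ReflTransGen (fun a b => 0 < p a b) a b)
    (i j : Fin n) : hittingTime p i j = ∑' t, surv p t i j := by
  have hs := summable_surv hp0 hp1 hconn i j
  have ha := summable_hit hp0 hp1 hconn i j
  have h1 : Filter.Tendsto (fun N => ∑ t ∈ Finset.range (N + 1), (t : ℝ) * hitProb p t i j)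
      Filter.atTop (nhds (hittingTime p i j)) :=
    ha.hasSum.tendsto_sum_nat.comp (Filter.tendsto_add_atTop_nat 1)
  have h2 : Filter.Tendsto
      (fun N => ∑ t ∈ Finset.range N, surv p t i j - (N : ℝ) * surv p N i j)
      Filter.atTop (nhds (∑' t, surv p t i j)) := by
    simpa using hs.hasSum.tendsto_sum_nat.sub (tendsto_mul_surv hp0 hp1 hconn i j)
  have h3 : (fun N => ∑ t ∈ Finset.range (N + 1), (t : ℝ) * hitProb p t i j)
      = fun N => ∑ t ∈ Finset.range N, surv p t i j - (N : ℝ) * surv p N i j :=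
    funext fun N => key_partial_sum hp0 hp1 i j N
  rw [h3] at h1
  exact tendsto_nhds_unique h1 h2

theorem hittingTime_succ
    (hconn : ∀ a b : Fin n, Relation.ReflTransGen (fun a b => 0 < p a b) a b)
    {i j : Fin n} (h : i ≠ j) :
    hittingTime p i j = 1 + ∑ l, p i l * hittingTime p l j := by
  rw [hittingTime_eq hp0 hp1 hconn i j]
  rw [Summable.tsum_eq_zero_add (summable_surv hp0 hp1 hconn i j)]
  have h0 : surv p 0 i j = 1 := by rw [surv_zero, if_neg h]
  have hstep : ∀ t : ℕ, surv p (t + 1) i j = ∑ l, p i l * surv p t l j := fun t => by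
    rw [surv_succ, if_neg h]
  rw [h0, tsum_congr hstep]
  congr 1
  rw [Summable.tsum_finsetSum (fun l _ => (summable_surv hp0 hp1 hconn l j).mul_left (p i l))]
  refine Finset.sum_congr rfl fun l _ => ?_
  rw [(summable_surv hp0 hp1 hconn l j).tsum_mul_left, hittingTime_eq hp0 hp1 hconn l j]

theorem hit_triangle
    (hconn : ∀ a b : Fin n, Relation.ReflTransGen (fun a b => 0 < p a b) a b)
    (i j k : Fin n) : hittingTime p i j ≤ hittingTime p i k + hittingTime p k j := by
  set H := hittingTime p with hH
  set u : Fin n → ℝ := fun x => H x k + H k j - H x j with hu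
  have goal_iff : hittingTime p i j ≤ hittingTime p i k + hittingTime p k j ↔ 0 ≤ u i := by
    simp only [hu, hH]; constructor <;> intro <;> linarith
  rw [goal_iff]
  obtain ⟨i0, -, hmin⟩ := Finset.exists_min_image Finset.univ u ⟨i, Finset.mem_univ i⟩
  by_contra hneg
  push_neg at hneg
  have hi0 : u i0 < 0 := lt_of_le_of_lt (hmin i (Finset.mem_univ i)) hneg
  have huk : u k = 0 := by simp [hu, hH, hittingTime_self]
  have huj : 0 ≤ u j := by
    have h1 : H j j = 0 := hittingTime_self p j
    have h2 : 0 ≤ H j k := hittingTime_nonneg hp0 j k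
    have h3 : 0 ≤ H k j := hittingTime_nonneg hp0 k j
    simp only [hu]; linarith
  have key : ∀ x y, u x = u i0 → 0 < p x y → u y = u i0 := by
    intro x y hx hxy
    have hxk : x ≠ k := by
      intro e; rw [e, huk] at hx; exact absurd hx.symm (ne_of_lt hi0)
    have hxj : x ≠ j := by
      intro e; rw [e] at hx; rw [hx] at huj; exact absurd hi0 (not_lt.mpr huj)
    have hrec : u x = ∑ l, p x l * u l := by
      have h1 := hittingTime_succ hp0 hp1 hconn hxk
      have h2 := hittingTime_succ hp0 hp1 hconn hxj
      have e1 : ∑ l, p x l * u l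
          = (∑ l, p x l * H l k) + (∑ l, p x l) * H k j - ∑ l, p x l * H l j := by
        simp only [hu, mul_add, mul_sub]
        rw [Finset.sum_sub_distrib, Finset.sum_add_distrib, Finset.sum_mul]
      rw [e1, hp1 x, one_mul]
      simp only [hu, hH]
      rw [h1, h2]
      ring
    have hzero : ∑ l, p x l * (u l - u i0) = 0 := by
      have e2 : ∑ l, p x l * (u l - u i0)
          = (∑ l, p x l * u l) - (∑ l, p x l) * u i0 := by
        simp only [mul_sub]
        rw [Finset.sum_sub_distrib, Finset.sum_mul]
      rw [e2, ← hrec, hx, hp1 x, one_mul, sub_self]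
    have hterm := (Finset.sum_eq_zero_iff_of_nonneg
      (fun l _ => mul_nonneg (hp0 x l) (sub_nonneg.mpr (hmin l (Finset.mem_univ l))))).mp
      hzero y (Finset.mem_univ y)
    rcases mul_eq_zero.mp hterm with h | h
    · exact absurd h (ne_of_gt hxy)
    · linarith [sub_eq_zero.mp h]
  have hpath : ∀ b : Fin n, Relation.ReflTransGen (fun a b => 0 < p a b) i0 b → u b = u i0 := by
    intro b hb
    induction hb with
    | refl => rfl
    | tail hab hbc ih => exact key _ _ ih hbc
  have := hpath k (hconn i0 k)
  rw [huk] at this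
  exact absurd this.symm (ne_of_lt hi0)

end basic

end CTProof

/-- The commute time `c i j = h i j + h j i` of the natural random walk on a
connected weighted graph is a metric on the nodes: zero on the diagonal,
symmetric, and satisfying the triangle inequality. -/
theorem commute_time_is_metric {n : ℕ} (w : Fin n → Fin n → ℝ)
    (hsymm : ∀ i j, w i j = w j i) (hnonneg : ∀ i j, 0 ≤ w i j)
    (hconn : ∀ i j : Fin n, Relation.ReflTransGen (fun a b => 0 < w a b) i j)
    (d : Fin n → ℝ) (hd : ∀ i, d i = ∑ j, w i j)
    (p : Fin n → Fin n → ℝ) (hp : ∀ i l, p i l = w i l / d i)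
    (c : Fin n → Fin n → ℝ)
    (hc : ∀ i j, c i j = hittingTime p i j + hittingTime p j i) :
    (∀ i, c i i = 0) ∧ (∀ i j, c i j = c j i) ∧
      (∀ i j k, c i j ≤ c i k + c k j) := by
  classical
  have hself : ∀ i, c i i = 0 := fun i => by
    rw [hc, CTProof.hittingTime_self, add_zero]
  refine ⟨hself, fun i j => by rw [hc, hc j i, add_comm], ?_⟩
  intro i j k
  by_cases hex : ∃ a b : Fin n, a ≠ b
  · have hdpos : ∀ a : Fin n, 0 < d a := by
      intro a
      obtain ⟨x, y, hxy⟩ := hex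
      have hb : ∃ b : Fin n, b ≠ a := by
        by_cases h : x = a
        · subst h; exact ⟨y, fun e => hxy e.symm⟩
        · exact ⟨x, h⟩
      obtain ⟨b, hba⟩ := hb
      rcases (hconn a b).cases_head with h | ⟨e, hae, -⟩
      · exact absurd h.symm hba
      · have h1 : w a e ≤ d a := by
          rw [hd]
          exact Finset.single_le_sum (fun l _ => hnonneg a l) (Finset.mem_univ e)
        linarith
    have hp0 : ∀ a l, 0 ≤ p a l := fun a l => by
      rw [hp]; exact div_nonneg (hnonneg a l) (hdpos a).le
    have hp1 : ∀ a, ∑ l, p a l = 1 := by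
      intro a
      have h1 : ∑ l, p a l = (∑ l, w a l) / d a := by
        rw [Finset.sum_div]
        exact Finset.sum_congr rfl fun l _ => hp a l
      rw [h1, ← hd, div_self (ne_of_gt (hdpos a))]
    have hconn' : ∀ a b : Fin n, Relation.ReflTransGen (fun a b => 0 < p a b) a b := by
      intro a b
      refine Relation.ReflTransGen.mono ?_ _ _ (hconn a b)
      intro x y hxy
      rw [hp]; exact div_pos hxy (hdpos x)
    rw [hc, hc, hc]
    have t1 := CTProof.hit_triangle hp0 hp1 hconn' i j k
    have t2 := CTProof.hit_triangle hp0 hp1 hconn' j i k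
    linarith
  · push_neg at hex
    have h1 := hex i j
    have h2 := hex i k
    subst h1; subst h2
    simp [hself]
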